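/- There is no integer m ≥ 6 such that 8·(10^m−1)/9 + 33 is a perfect square. -/

import Mathlib

theorem stmt14 : ¬ ∃ m : ℕ, 6 ≤ m ∧ ∃ k : ℕ, 8 * ((10 ^ m - 1) / 9) + 33 = k ^ 2 := by
  rintro ⟨m, hm, k, hk⟩
  have hpow : (1:ℕ) ≤ 10 ^ m := Nat.one_le_pow _ _ (by norm_num)
  have h9 : 9 ∣ 10 ^ m - 1 := by
    have h1 : (10:ℕ) ^ m % 9 = 1 := by
      rw [Nat.pow_mod]; norm_num
    omega
  obtain ⟨t, ht⟩ := h9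
  have hdiv : (10 ^ m - 1) / 9 = t := by omega
  rw [hdiv] at hk
  have hk9 : 9 * k ^ 2 = 8 * 10 ^ m + 289 := by omega
  have hx2 : (3 * k) ^ 2 = 8 * 10 ^ m + 289 := by
    rw [show (3 * k) ^ 2 = 9 * k ^ 2 by ring]; exact hk9
  set x := 3 * k with hxdef
  -- x is odd
  have hodd : x % 2 = 1 := by
    rcases Nat.even_or_odd x with ⟨c, hc⟩ | ⟨c, hc⟩
    · exfalso
      have h4 : x ^ 2 = 4 * (c * c) := by rw [hc]; ring
      omega
    · omega
  obtain ⟨c, hc⟩ : ∃ c, x = 2 * c + 1 := ⟨x / 2, by omega⟩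
  -- c ≥ 8
  have hc8 : 8 ≤ c := by
    by_contra h
    push_neg at h
    have h2 : (2 * c + 1) ^ 2 = 8 * 10 ^ m + 289 := by rw [← hc]; exact hx2
    interval_cases c <;> norm_num at h2
  set a := c - 8 with hadef
  have hca : c = a + 8 := by omega
  have hab : a * (a + 17) = 2 * 10 ^ m := by
    have h1 : (2 * (a + 8) + 1) ^ 2 = 8 * 10 ^ m + 289 := by
      rw [← hca, ← hc]; exact hx2
    nlinarith [h1]
  have hab2 : a * (a + 17) = 2 ^ (m + 1) * 5 ^ m := by
    rw [hab, show (10:ℕ) = 2 * 5 from rfl, mul_pow, pow_succ]; ring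
  have ha0 : 0 < a := by
    rcases Nat.eq_zero_or_pos a with h | h
    · rw [h, zero_mul] at hab; omega
    · exact h
  have p17 : Nat.Prime 17 := by norm_num
  have p5 : Nat.Prime 5 := by norm_num
  have h17 : ¬ (17 ∣ a) := by
    intro h
    have hd : (17:ℕ) ∣ 2 * 10 ^ m := hab ▸ Dvd.dvd.mul_right h _
    rcases (Nat.Prime.dvd_mul p17).mp hd with h2 | h2
    · norm_num at h2
    · have := Nat.Prime.dvd_of_dvd_pow p17 h2
      norm_num at this
  have hcop : Nat.Coprime a (a + 17) := by
    have hg : Nat.gcd a (a + 17) ∣ 17 := by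
      have h1 := Nat.dvd_sub (Nat.gcd_dvd_right a (a + 17)) (Nat.gcd_dvd_left a (a + 17))
      simpa using h1
    rcases (Nat.dvd_prime p17).mp hg with h1 | h1
    · exact h1
    · exact absurd (h1 ▸ Nat.gcd_dvd_left a (a + 17)) h17
  have hd5 : (5:ℕ) ^ m ∣ a * (a + 17) := by
    rw [hab2]; exact dvd_mul_left _ _
  have hp5pos : 0 < (5:ℕ) ^ m := Nat.pow_pos (by norm_num)
  have hlt : 2 ^ (m + 1) + 17 < 5 ^ m := by
    have h1 : (17:ℕ) < 2 ^ (m + 1) := by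
      calc (17:ℕ) < 2 ^ 5 := by norm_num
      _ ≤ 2 ^ (m + 1) := Nat.pow_le_pow_right (by norm_num) (by omega)
    have h2 : (2:ℕ) ^ (m + 2) ≤ 2 ^ (2 * m) := Nat.pow_le_pow_right (by norm_num) (by omega)
    have h3 : (2:ℕ) ^ (2 * m) = 4 ^ m := by
      rw [show (4:ℕ) = 2 ^ 2 from rfl, ← pow_mul, mul_comm]
    have h4 : (4:ℕ) ^ m < 5 ^ m := Nat.pow_lt_pow_left (by norm_num) (by omega)
    have h5 : (2:ℕ) ^ (m + 2) = 2 * 2 ^ (m + 1) := by rw [pow_succ]; ring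
    omega
  by_cases h5a : 5 ∣ a
  · -- 5 ∤ a + 17, hence 5^m ∣ a
    have h5b : ¬ (5 ∣ a + 17) := by
      intro h
      have hg : (5:ℕ) ∣ Nat.gcd a (a + 17) := Nat.dvd_gcd h5a h
      rw [hcop.gcd_eq_one] at hg
      norm_num at hg
    have hcb : Nat.Coprime (5 ^ m) (a + 17) :=
      Nat.Coprime.pow_left _ ((Nat.Prime.coprime_iff_not_dvd p5).mpr h5b)
    have hda : (5:ℕ) ^ m ∣ a := hcb.dvd_of_dvd_mul_right hd5
    have hle : 5 ^ m ≤ a := Nat.le_of_dvd ha0 hda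
    have h1 : 5 ^ m * (5 ^ m + 17) ≤ a * (a + 17) :=
      Nat.mul_le_mul hle (by omega)
    have h2 : 5 ^ m * (2 ^ (m + 1)) < 5 ^ m * (5 ^ m + 17) :=
      (mul_lt_mul_iff_right₀ hp5pos).mpr (by omega)
    have h3 : 5 ^ m * (2 ^ (m + 1)) = 2 ^ (m + 1) * 5 ^ m := mul_comm _ _
    omega
  · -- 5 ∤ a, hence 5^m ∣ a + 17
    have hca5 : Nat.Coprime (5 ^ m) a :=
      Nat.Coprime.pow_left _ ((Nat.Prime.coprime_iff_not_dvd p5).mpr h5a)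
    have hdb : (5:ℕ) ^ m ∣ a + 17 := hca5.dvd_of_dvd_mul_left hd5
    have hle : 5 ^ m ≤ a + 17 := Nat.le_of_dvd (by omega) hdb
    have h1 : 2 ^ (m + 1) + 1 ≤ a := by omega
    have h2 : (2 ^ (m + 1) + 1) * 5 ^ m ≤ a * (a + 17) :=
      Nat.mul_le_mul h1 hle
    have h3 : 2 ^ (m + 1) * 5 ^ m < (2 ^ (m + 1) + 1) * 5 ^ m :=
      (mul_lt_mul_iff_left₀ hp5pos).mpr (by omega)
    omega
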